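/- Let G be a finite group with irreducible representations indexed by Ĝ. Let γ₁^{(1)} be the k=1 hidden shift state averaged over uniform s ∈ G, i.e. γ₁^{(1)} = (1/(2|G|²)) ∑_{s∈G} [[I, R(s)],[R(s⁻¹), I]]. Then rank γ₁^{(1)} = 2|G| − 1. -/

import Mathlib

/-- The rank of the averaged (k = 1) hidden shift state
`γ₁^{(1)} = (1/(2|G|²)) ∑_s [[I, R(s)],[R(s⁻¹), I]]` equals `2|G| − 1`. -/
theorem rank_averaged_hidden_shift_state_one
    {G : Type*} [Group G] [Fintype G] [DecidableEq G] :
    ((2 * (Fintype.card G : ℂ) ^ 2)⁻¹ • ∑ s : G,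
        Matrix.fromBlocks 1
          (Matrix.of fun h g : G => if g = h * s then (1 : ℂ) else 0)
          (Matrix.of fun h g : G => if g = h * s⁻¹ then (1 : ℂ) else 0) 1).rank
      = 2 * Fintype.card G - 1 := by
  classical
  set n := Fintype.card G with hn
  have hnpos : 0 < n := Fintype.card_pos
  have hn0 : ((n : ℂ)) ≠ 0 := Nat.cast_ne_zero.2 hnpos.ne'
  have hc : (2 * (n : ℂ) ^ 2)⁻¹ ≠ 0 := by
    simp [hn0]
  have hsmulrank : ∀ A : Matrix (G ⊕ G) (G ⊕ G) ℂ,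
      ((2 * (n : ℂ) ^ 2)⁻¹ • A).rank = A.rank := by
    intro A
    have h1 : ((2 * (n : ℂ) ^ 2)⁻¹ • A).mulVecLin
        = (2 * (n : ℂ) ^ 2)⁻¹ • A.mulVecLin := by
      ext x
      simp [Matrix.mulVecLin_apply, Matrix.smul_mulVec]
    show Module.finrank ℂ (LinearMap.range ((2 * (n : ℂ) ^ 2)⁻¹ • A).mulVecLin)
        = Module.finrank ℂ (LinearMap.range A.mulVecLin)
    rw [h1, LinearMap.range_smul _ _ hc]
  rw [hsmulrank]
  set J : Matrix G G ℂ := Matrix.of fun _ _ => 1 with hJ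
  set B : Matrix (G ⊕ G) (G ⊕ G) ℂ :=
    Matrix.fromBlocks ((n : ℂ) • 1) J J ((n : ℂ) • 1) with hB
  have key : ∀ h g : G, (∑ s : G, if g = h * s then (1 : ℂ) else 0) = 1 := by
    intro h g
    calc (∑ s : G, if g = h * s then (1 : ℂ) else 0)
        = ∑ s : G, (if s = h⁻¹ * g then (1 : ℂ) else 0) := by
          refine Finset.sum_congr rfl fun s _ => ?_
          congr 1
          simp only [eq_iff_iff, eq_inv_mul_iff_mul_eq]
          exact ⟨fun hh => hh.symm, fun hh => hh.symm⟩
      _ = 1 := by simp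
  have key' : ∀ h g : G, (∑ s : G, if g = h * s⁻¹ then (1 : ℂ) else 0) = 1 := by
    intro h g
    calc (∑ s : G, if g = h * s⁻¹ then (1 : ℂ) else 0)
        = ∑ s : G, (if s = g⁻¹ * h then (1 : ℂ) else 0) := by
          refine Finset.sum_congr rfl fun s _ => ?_
          congr 1
          simp only [eq_iff_iff]
          constructor
          · intro hh; rw [hh]; group
          · intro hh; rw [hh]; group
      _ = 1 := by simp
  have hAB : (∑ s : G, Matrix.fromBlocks 1
          (Matrix.of fun h g : G => if g = h * s then (1 : ℂ) else 0)
          (Matrix.of fun h g : G => if g = h * s⁻¹ then (1 : ℂ) else 0) 1) = B := by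
    ext i j
    rcases i with h | h <;> rcases j with g | g <;>
      simp [hB, hJ, Matrix.sum_apply, Matrix.one_apply, key, key',
        Finset.sum_const, hn, mul_comm]
  rw [hAB]
  -- the kernel vector
  set v : G ⊕ G → ℂ := Sum.elim (fun _ => 1) (fun _ => -1) with hv
  have hv0 : v ≠ 0 := by
    intro h
    have := congrFun h (Sum.inl 1)
    simp [hv] at this
  -- mulVec formulas
  have hmulL : ∀ (x : G ⊕ G → ℂ) (h : G),
      B.mulVec x (Sum.inl h) = n * x (Sum.inl h) + ∑ g, x (Sum.inr g) := by
    intro x h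
    simp [Matrix.mulVec, dotProduct, Fintype.sum_sum_type, hB, hJ,
      Matrix.one_apply, ite_mul, Finset.sum_ite_eq, mul_assoc]
  have hmulR : ∀ (x : G ⊕ G → ℂ) (h : G),
      B.mulVec x (Sum.inr h) = (∑ g, x (Sum.inl g)) + n * x (Sum.inr h) := by
    intro x h
    simp [Matrix.mulVec, dotProduct, Fintype.sum_sum_type, hB, hJ,
      Matrix.one_apply, ite_mul, Finset.sum_ite_eq, mul_assoc]
  have hker : LinearMap.ker B.mulVecLin = Submodule.span ℂ {v} := by
    apply le_antisymm
    · intro x hx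
      rw [LinearMap.mem_ker] at hx
      have hx' : B.mulVec x = 0 := hx
      set Sr := ∑ g, x (Sum.inr g) with hSr
      set Sl := ∑ g, x (Sum.inl g) with hSl
      have hL : ∀ h, n * x (Sum.inl h) + Sr = 0 := by
        intro h
        have := congrFun hx' (Sum.inl h)
        rwa [hmulL] at this
      have hR : ∀ h, Sl + n * x (Sum.inr h) = 0 := by
        intro h
        have := congrFun hx' (Sum.inr h)
        rwa [hmulR] at this
      have hxl : ∀ h, x (Sum.inl h) = -Sr / n := by
        intro h
        rw [eq_div_iff hn0]
        linear_combination hL h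
      have hSlval : Sl = -Sr := by
        rw [hSl]
        calc (∑ g, x (Sum.inl g)) = ∑ _g : G, (-Sr / n) := by
              exact Finset.sum_congr rfl fun g _ => hxl g
          _ = n * (-Sr / n) := by rw [Finset.sum_const]; simp [mul_comm]; exact Or.inl hn.symm
          _ = -Sr := by field_simp
      have hxr : ∀ h, x (Sum.inr h) = Sr / n := by
        intro h
        have h2 := hR h
        rw [hSlval] at h2
        rw [eq_div_iff hn0]
        linear_combination h2
      rw [Submodule.mem_span_singleton]
      refine ⟨-Sr / n, ?_⟩
      funext i
      rcases i with h | h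
      · simp [hv, hxl h]
      · simp [hv, hxr h]
        ring
    · rw [Submodule.span_le, Set.singleton_subset_iff]
      have : B.mulVecLin v = 0 := by
        show B.mulVec v = 0
        funext i
        rcases i with h | h
        · rw [hmulL]
          simp [hv, Finset.sum_const, hn]
        · rw [hmulR]
          simp [hv, Finset.sum_const, hn]
      exact LinearMap.mem_ker.2 this
  have hkerfr : Module.finrank ℂ (LinearMap.ker B.mulVecLin) = 1 := by
    rw [hker]
    exact finrank_span_singleton hv0
  have hrn := LinearMap.finrank_range_add_finrank_ker B.mulVecLin
  have hdom : Module.finrank ℂ (G ⊕ G → ℂ) = 2 * n := by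
    rw [Module.finrank_fintype_fun_eq_card, Fintype.card_sum]
    omega
  rw [hdom, hkerfr] at hrn
  have hrank : B.rank = Module.finrank ℂ (LinearMap.range B.mulVecLin) := rfl
  rw [hrank]
  omega
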